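/- Let n ≥ 1 be an integer, ξ ∈ ℝ, and let a, b, c, d be integers with ad − bc ≠ 0 and cξ + d ≠ 0. Then λ_n(ξ) = λ_n((aξ+b)/(cξ+d)). -/

import Mathlib

open MeasureTheory
open scoped ENNReal

/-- Distance from a real number to the nearest integer. -/
noncomputable def distNearestInt (y : ℝ) : ℝ := |y - round y|

/-- The `n`-th simultaneous Diophantine exponent `λ_n(x) ∈ [0,∞]`: the supremum of all
`λ > 0` such that `max_{1 ≤ i ≤ n} ‖q x^i‖ ≤ q^{-λ}` holds for infinitely many positive
integers `q`. -/
noncomputable def simExponent (n : ℕ) (x : ℝ) : ℝ≥0∞ :=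
  sSup (ENNReal.ofReal '' {l : ℝ | 0 < l ∧
    {q : ℕ | 0 < q ∧
      ∀ i ∈ Finset.Icc 1 n, distNearestInt ((q : ℝ) * x ^ i) ≤ (q : ℝ) ^ (-l)}.Infinite})

/-- `S_n(I, λ) = {x ∈ I : λ_n(x) > λ}`. -/
noncomputable def SimSet (n : ℕ) (I : Set ℝ) (lam : ℝ) : Set ℝ :=
  {x ∈ I | ENNReal.ofReal lam < simExponent n x}

set_option maxHeartbeats 1000000 in
open Polynomial Finset in
lemma key_infinite (n : ℕ) (ξ : ℝ) (a b c d : ℤ)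
    (h2 : (c : ℝ) * ξ + (d : ℝ) ≠ 0) {l l' : ℝ} (hl' : 0 < l') (hll : l' < l)
    (hinf : {q : ℕ | 0 < q ∧ ∀ i ∈ Finset.Icc 1 n,
        distNearestInt ((q : ℝ) * ξ ^ i) ≤ (q : ℝ) ^ (-l)}.Infinite) :
    {q : ℕ | 0 < q ∧ ∀ i ∈ Finset.Icc 1 n,
        distNearestInt ((q : ℝ) * (((a : ℝ) * ξ + (b : ℝ)) / ((c : ℝ) * ξ + (d : ℝ))) ^ i)
          ≤ (q : ℝ) ^ (-l')}.Infinite := by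
  classical
  set D : ℝ := (c : ℝ) * ξ + (d : ℝ) with hD
  set Nr : ℝ := (a : ℝ) * ξ + (b : ℝ) with hNr
  set η : ℝ := Nr / D with hη
  have hK : (0:ℝ) < |D| ^ n := pow_pos (abs_pos.mpr h2) n
  set K : ℝ := |D| ^ n with hKdef
  -- the integer polynomials
  set P : ℕ → Polynomial ℤ := fun i => (C a * X + C b) ^ i * (C c * X + C d) ^ (n - i) with hP
  have hdP : ∀ i, i ≤ n → (P i).natDegree ≤ n := by
    intro i hi
    refine natDegree_mul_le.trans ?_
    have e1 : ((C a * X + C b : Polynomial ℤ) ^ i).natDegree ≤ i := by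
      refine natDegree_pow_le.trans ?_
      have h : (C a * X + C b : Polynomial ℤ).natDegree ≤ 1 := natDegree_linear_le
      calc i * (C a * X + C b : Polynomial ℤ).natDegree ≤ i * 1 := Nat.mul_le_mul_left i h
        _ = i := Nat.mul_one i
    have e2 : ((C c * X + C d : Polynomial ℤ) ^ (n - i)).natDegree ≤ n - i := by
      refine natDegree_pow_le.trans ?_
      have h : (C c * X + C d : Polynomial ℤ).natDegree ≤ 1 := natDegree_linear_le
      calc (n - i) * (C c * X + C d : Polynomial ℤ).natDegree ≤ (n - i) * 1 :=
            Nat.mul_le_mul_left (n - i) h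
        _ = n - i := Nat.mul_one (n - i)
    omega
  have heval : ∀ i, i ≤ n →
      ∑ j ∈ range (n + 1), ((P i).coeff j : ℝ) * ξ ^ j = Nr ^ i * D ^ (n - i) := by
    intro i hi
    have hlt : (((P i).map (Int.castRingHom ℝ)).natDegree) < n + 1 :=
      lt_of_le_of_lt (natDegree_map_le.trans (hdP i hi)) (Nat.lt_succ_self n)
    have h2' : ((P i).map (Int.castRingHom ℝ)).eval ξ = Nr ^ i * D ^ (n - i) := by
      simp [hP, Polynomial.map_mul, Polynomial.map_pow, Polynomial.map_add, hNr, hD]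
    calc ∑ j ∈ range (n + 1), ((P i).coeff j : ℝ) * ξ ^ j
        = ∑ j ∈ range (n + 1), ((P i).map (Int.castRingHom ℝ)).coeff j * ξ ^ j :=
          Finset.sum_congr rfl (fun j _ => by rw [coeff_map]; rfl)
      _ = ((P i).map (Int.castRingHom ℝ)).eval ξ := (eval_eq_sum_range' hlt ξ).symm
      _ = Nr ^ i * D ^ (n - i) := h2'
  -- the constant
  set Cr : ℝ := (∑ i ∈ range (n + 1), ∑ j ∈ range (n + 1), |((P i).coeff j : ℝ)|) + 1 with hCr
  have hCrpos : 0 < Cr := by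
    have : (0:ℝ) ≤ ∑ i ∈ range (n + 1), ∑ j ∈ range (n + 1), |((P i).coeff j : ℝ)| :=
      Finset.sum_nonneg fun _ _ => Finset.sum_nonneg fun _ _ => abs_nonneg _
    linarith
  have hrow : ∀ i ∈ range (n + 1), ∑ j ∈ range (n + 1), |((P i).coeff j : ℝ)| ≤ Cr := by
    intro i hi
    have := Finset.single_le_sum
      (f := fun i => ∑ j ∈ range (n + 1), |((P i).coeff j : ℝ)|)
      (fun i _ => Finset.sum_nonneg fun _ _ => abs_nonneg _) hi
    linarith
  set B : ℝ := (max 1 |η|) ^ n with hBdef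
  have hB : ∀ i, i ≤ n → |η| ^ i ≤ B := by
    intro i hi
    calc |η| ^ i ≤ (max 1 |η|) ^ i :=
          pow_le_pow_left₀ (abs_nonneg _) (le_max_right _ _) i
      _ ≤ B := pow_le_pow_right₀ (le_max_left _ _) hi
  have hBpos : 0 < B := pow_pos (lt_of_lt_of_le one_pos (le_max_left _ _)) n
  set C₂ : ℝ := Cr * (1 + B) with hC₂
  have hC₂pos : 0 < C₂ := mul_pos hCrpos (by linarith)
  set R : ℝ := C₂ * (2 * K) ^ l' with hR
  have hRpos : 0 < R := mul_pos hC₂pos (Real.rpow_pos_of_pos (by linarith) _)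
  -- sign
  set s : ℤ := if 0 < D ^ n then 1 else -1 with hs
  have hsD : (s : ℝ) * D ^ n = K := by
    by_cases h : 0 < D ^ n
    · simp only [hs, if_pos h, Int.cast_one, one_mul, hKdef, ← abs_pow]
      exact (abs_of_pos h).symm
    · have hne : D ^ n ≠ 0 := pow_ne_zero n h2
      have hneg : D ^ n < 0 := lt_of_le_of_ne (not_lt.mp h) hne
      simp only [hs, if_neg h, Int.cast_neg, Int.cast_one, neg_one_mul, hKdef, ← abs_pow]
      exact (abs_of_neg hneg).symm
  have hsabs : |(s : ℝ)| = 1 := by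
    by_cases h : 0 < D ^ n <;> simp [hs, h]
  -- unboundedness argument
  refine Set.infinite_of_forall_exists_gt ?_
  intro N
  obtain ⟨M, hM⟩ := exists_nat_ge (max ((Cr + N + 1) / K) (max 1 (R ^ (l - l')⁻¹)))
  obtain ⟨q, hq, hqM⟩ := hinf.exists_gt M
  obtain ⟨hq0, hqgood⟩ := hq
  have hqM' : (M : ℝ) ≤ (q : ℝ) := by exact_mod_cast hqM.le
  have hqb : max ((Cr + N + 1) / K) (max 1 (R ^ (l - l')⁻¹)) ≤ (q : ℝ) := hM.trans hqM'
  have hq1 : (1:ℝ) ≤ (q:ℝ) := le_trans (le_trans (le_max_left _ _) (le_max_right _ _)) hqb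
  have hqpos : (0:ℝ) < (q:ℝ) := lt_of_lt_of_le one_pos hq1
  have hqR : R ≤ (q : ℝ) ^ (l - l') := by
    calc R = (R ^ (l - l')⁻¹) ^ (l - l') :=
          (Real.rpow_inv_rpow hRpos.le (by linarith)).symm
      _ ≤ (q : ℝ) ^ (l - l') := by
          refine Real.rpow_le_rpow (Real.rpow_nonneg hRpos.le _) ?_ (by linarith)
          exact le_trans (le_trans (le_max_right _ _) (le_max_right _ _)) hqb
  have hqK : Cr + N + 1 ≤ (q : ℝ) * K := by
    have h := le_trans (le_max_left _ _) hqb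
    calc Cr + N + 1 = ((Cr + N + 1) / K) * K := (div_mul_cancel₀ _ hK.ne').symm
      _ ≤ (q : ℝ) * K := mul_le_mul_of_nonneg_right h hK.le
  have hN0 : (0:ℝ) ≤ (N:ℝ) := Nat.cast_nonneg N
  -- approximation data
  have hql : (0:ℝ) < (q:ℝ) ^ (-l) := Real.rpow_pos_of_pos hqpos _
  have hql1 : (q:ℝ) ^ (-l) ≤ 1 :=
    Real.rpow_le_one_of_one_le_of_nonpos hq1 (by linarith)
  set p : ℕ → ℤ := fun j => if j = 0 then (q : ℤ) else round ((q : ℝ) * ξ ^ j) with hp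
  have hδ : ∀ j ∈ range (n + 1), |(p j : ℝ) - (q : ℝ) * ξ ^ j| ≤ (q : ℝ) ^ (-l) := by
    intro j hj
    rcases Nat.eq_zero_or_pos j with rfl | hjpos
    · simp [hp]
      positivity
    · have hji : j ∈ Finset.Icc 1 n := by
        simp only [Finset.mem_range] at hj
        simp only [Finset.mem_Icc]; omega
      have h := hqgood j hji
      simp only [hp, if_neg (Nat.pos_iff_ne_zero.mp hjpos)]
      rw [abs_sub_comm]
      exact h
  set w : ℕ → ℤ := fun i => ∑ j ∈ range (n + 1), (P i).coeff j * p j with hw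
  have hwbound : ∀ i, i ≤ n →
      |(w i : ℝ) - (q : ℝ) * (Nr ^ i * D ^ (n - i))| ≤ Cr * (q : ℝ) ^ (-l) := by
    intro i hi
    have e1 : (w i : ℝ) = ∑ j ∈ range (n + 1), ((P i).coeff j : ℝ) * (p j : ℝ) := by
      simp [hw]
    have e2 : (q : ℝ) * (Nr ^ i * D ^ (n - i))
        = ∑ j ∈ range (n + 1), ((P i).coeff j : ℝ) * ((q : ℝ) * ξ ^ j) := by
      rw [← heval i hi, Finset.mul_sum]
      exact Finset.sum_congr rfl (fun j _ => by ring)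
    rw [e1, e2, ← Finset.sum_sub_distrib]
    calc |∑ j ∈ range (n + 1), (((P i).coeff j : ℝ) * (p j : ℝ)
            - ((P i).coeff j : ℝ) * ((q : ℝ) * ξ ^ j))|
        ≤ ∑ j ∈ range (n + 1), |((P i).coeff j : ℝ) * (p j : ℝ)
            - ((P i).coeff j : ℝ) * ((q : ℝ) * ξ ^ j)| := Finset.abs_sum_le_sum_abs _ _
      _ ≤ ∑ j ∈ range (n + 1), |((P i).coeff j : ℝ)| * (q : ℝ) ^ (-l) := by
          refine Finset.sum_le_sum fun j hj => ?_
          rw [← mul_sub, abs_mul]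
          exact mul_le_mul_of_nonneg_left (hδ j hj) (abs_nonneg _)
      _ = (∑ j ∈ range (n + 1), |((P i).coeff j : ℝ)|) * (q : ℝ) ^ (-l) := by
          rw [Finset.sum_mul]
      _ ≤ Cr * (q : ℝ) ^ (-l) :=
          mul_le_mul_of_nonneg_right (hrow i (Finset.mem_range.mpr (by omega))) hql.le
  -- q'
  set q'i : ℤ := s * w 0 with hq'i
  have hq'b : |(q'i : ℝ) - (q : ℝ) * K| ≤ Cr * (q : ℝ) ^ (-l) := by
    have h0 : (q'i : ℝ) - (q : ℝ) * K
        = (s : ℝ) * ((w 0 : ℝ) - (q : ℝ) * (Nr ^ 0 * D ^ (n - 0))) := by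
      push_cast [hq'i]
      simp only [pow_zero, one_mul, Nat.sub_zero]
      linear_combination ((q:ℝ)) * hsD
    rw [h0, abs_mul, hsabs, one_mul]
    exact hwbound 0 (Nat.zero_le n)
  have hCrq : Cr * (q : ℝ) ^ (-l) ≤ Cr := mul_le_of_le_one_right hCrpos.le hql1
  have habs := abs_le.mp hq'b
  have hq'lb : (N : ℝ) + 1 ≤ (q'i : ℝ) := by linarith [habs.1]
  have hq'ub : (q'i : ℝ) ≤ 2 * ((q : ℝ) * K) := by linarith [habs.2]
  have hq'r : (0:ℝ) < (q'i : ℝ) := by linarith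
  have hq'pos : 0 < q'i := by exact_mod_cast hq'r
  refine ⟨q'i.toNat, ⟨?_, ?_⟩, ?_⟩
  · omega
  · -- approximation property
    intro i hi
    have hin : i ≤ n := (Finset.mem_Icc.mp hi).2
    have hcast : ((q'i.toNat : ℕ) : ℝ) = (q'i : ℝ) := by
      exact_mod_cast congrArg (Int.cast : ℤ → ℝ) (Int.toNat_of_nonneg hq'pos.le)
    rw [hcast]
    have hDpow : D ^ n * η ^ i = Nr ^ i * D ^ (n - i) := by
      rw [hη, div_pow, pow_sub₀ D h2 hin]
      field_simp
    have key : |(q'i : ℝ) * η ^ i - ((s * w i : ℤ) : ℝ)| ≤ C₂ * (q : ℝ) ^ (-l) := by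
      have expand : (q'i : ℝ) * η ^ i - ((s * w i : ℤ) : ℝ)
          = ((q'i : ℝ) - (q : ℝ) * K) * η ^ i
            - (s : ℝ) * ((w i : ℝ) - (q : ℝ) * (Nr ^ i * D ^ (n - i))) := by
        push_cast
        linear_combination (-(q:ℝ) * η ^ i) * hsD + ((s:ℝ) * (q:ℝ)) * hDpow
      rw [expand]
      calc |((q'i : ℝ) - (q : ℝ) * K) * η ^ i
            - (s : ℝ) * ((w i : ℝ) - (q : ℝ) * (Nr ^ i * D ^ (n - i)))|
          ≤ |((q'i : ℝ) - (q : ℝ) * K) * η ^ i|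
            + |(s : ℝ) * ((w i : ℝ) - (q : ℝ) * (Nr ^ i * D ^ (n - i)))| := abs_sub _ _
        _ ≤ (Cr * (q : ℝ) ^ (-l)) * B + Cr * (q : ℝ) ^ (-l) := by
            gcongr ?_ + ?_
            · rw [abs_mul, abs_pow]
              exact mul_le_mul hq'b (hB i hin) (by positivity) (by positivity)
            · rw [abs_mul, hsabs, one_mul]
              exact hwbound i hin
        _ = C₂ * (q : ℝ) ^ (-l) := by rw [hC₂]; ring
    have h2K : (0:ℝ) < 2 * K := by linarith
    have e3 : ((2 * K) : ℝ) ^ (-l') * (2 * K) ^ l' = 1 := by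
      rw [← Real.rpow_add h2K]; simp
    have e4 : C₂ ≤ (2 * K) ^ (-l') * (q:ℝ) ^ (l - l') := by
      have eC : (2 * K) ^ (-l') * R = C₂ := by
        rw [hR, show ((2*K):ℝ) ^ (-l') * (C₂ * (2 * K) ^ l')
          = C₂ * (((2*K):ℝ) ^ (-l') * (2 * K) ^ l') from by ring, e3, mul_one]
      calc C₂ = (2 * K) ^ (-l') * R := eC.symm
        _ ≤ (2 * K) ^ (-l') * (q:ℝ) ^ (l - l') :=
            mul_le_mul_of_nonneg_left hqR (Real.rpow_nonneg h2K.le _)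
    have e5 : C₂ * (q:ℝ) ^ (-l) ≤ (2 * ((q:ℝ) * K)) ^ (-l') := by
      rw [show (2 * ((q:ℝ) * K)) = (2 * K) * (q:ℝ) from by ring,
        Real.mul_rpow h2K.le hqpos.le]
      have eq : (q:ℝ) ^ (-l) * (q:ℝ) ^ (l - l') = (q:ℝ) ^ (-l') := by
        rw [← Real.rpow_add hqpos]; congr 1; ring
      rw [← eq]
      calc C₂ * (q:ℝ) ^ (-l)
          ≤ ((2 * K) ^ (-l') * (q:ℝ) ^ (l - l')) * (q:ℝ) ^ (-l) :=
            mul_le_mul_of_nonneg_right e4 hql.le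
        _ = (2 * K) ^ (-l') * ((q:ℝ) ^ (-l) * (q:ℝ) ^ (l - l')) := by ring
    have e6 : (2 * ((q:ℝ) * K)) ^ (-l') ≤ (q'i:ℝ) ^ (-l') :=
      Real.rpow_le_rpow_of_nonpos hq'r hq'ub (by linarith)
    calc distNearestInt ((q'i:ℝ) * η ^ i)
        ≤ |(q'i:ℝ) * η ^ i - ((s * w i : ℤ) : ℝ)| := round_le _ _
      _ ≤ C₂ * (q : ℝ) ^ (-l) := key
      _ ≤ (q'i:ℝ) ^ (-l') := e5.trans e6
  · -- N < q'i.toNat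
    have h : (N : ℤ) < q'i := by
      have h' : ((N : ℤ) : ℝ) < (q'i : ℝ) := by push_cast; linarith
      exact_mod_cast h'
    omega

lemma simExponent_mobius_le (n : ℕ) (ξ : ℝ) (a b c d : ℤ)
    (h2 : (c : ℝ) * ξ + (d : ℝ) ≠ 0) :
    simExponent n ξ ≤ simExponent n (((a : ℝ) * ξ + (b : ℝ)) / ((c : ℝ) * ξ + (d : ℝ))) := by
  refine sSup_le ?_
  rintro e ⟨l, hl, rfl⟩
  obtain ⟨hl0, hinfl⟩ := hl
  refine le_of_forall_lt_imp_le_of_dense ?_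
  intro m hm
  have hmtop : m ≠ ⊤ := (hm.trans_le le_top).ne
  have hmlt : m.toReal < l := by
    have h := (ENNReal.toReal_lt_toReal hmtop ENNReal.ofReal_ne_top).mpr hm
    rwa [ENNReal.toReal_ofReal hl0.le] at h
  set l'' : ℝ := max m.toReal (l / 2) with hl''
  have h1'' : l'' < l := max_lt hmlt (by linarith)
  have h0'' : 0 < l'' := lt_of_lt_of_le (by linarith) (le_max_right _ _)
  have hinf' := key_infinite n ξ a b c d h2 h0'' h1'' hinfl
  calc m ≤ ENNReal.ofReal l'' := by
        rw [← ENNReal.ofReal_toReal hmtop]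
        exact ENNReal.ofReal_le_ofReal (le_max_left _ _)
    _ ≤ _ := by
        unfold simExponent
        exact le_sSup ⟨l'', ⟨h0'', hinf'⟩, rfl⟩

set_option maxHeartbeats 400000 in
/-- The simultaneous Diophantine exponent `λ_n` is invariant under the action of
integer Möbius maps: for integers `a, b, c, d` with `ad − bc ≠ 0` and `cξ + d ≠ 0`,
`λ_n(ξ) = λ_n((aξ+b)/(cξ+d))`. -/
theorem stmt10 (n : ℕ) (hn : 1 ≤ n) (ξ : ℝ) (a b c d : ℤ)
    (h1 : a * d - b * c ≠ 0) (h2 : (c : ℝ) * ξ + (d : ℝ) ≠ 0) :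
    simExponent n ξ = simExponent n (((a : ℝ) * ξ + (b : ℝ)) / ((c : ℝ) * ξ + (d : ℝ))) := by
  set η : ℝ := ((a : ℝ) * ξ + (b : ℝ)) / ((c : ℝ) * ξ + (d : ℝ)) with hη
  have hΔ : (a : ℝ) * (d : ℝ) - (b : ℝ) * (c : ℝ) ≠ 0 := by exact_mod_cast h1
  refine le_antisymm (simExponent_mobius_le n ξ a b c d h2) ?_
  have hval : -(c : ℝ) * η + (a : ℝ) = ((a : ℝ) * d - (b : ℝ) * c) / ((c : ℝ) * ξ + (d : ℝ)) := by
    rw [hη]; field_simp; ring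
  have h2' : ((-c : ℤ) : ℝ) * η + ((a : ℤ) : ℝ) ≠ 0 := by
    push_cast
    rw [hval]
    exact div_ne_zero hΔ h2
  have hnum : ((d : ℤ) : ℝ) * η + ((-b : ℤ) : ℝ) = ξ * (((-c : ℤ) : ℝ) * η + ((a : ℤ) : ℝ)) := by
    push_cast
    rw [hη]
    have hm := div_mul_cancel₀ ((a : ℝ) * ξ + (b : ℝ)) h2
    linear_combination hm
  have hback : (((d : ℤ) : ℝ) * η + ((-b : ℤ) : ℝ)) / (((-c : ℤ) : ℝ) * η + ((a : ℤ) : ℝ)) = ξ := by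
    rw [hnum]
    exact mul_div_cancel_right₀ ξ h2'
  have h := simExponent_mobius_le n η d (-b) (-c) a h2'
  rw [hback] at h
  exact h
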